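/- Let F and G be Borel probability measures on ℝ, let κ be a Markov kernel from ℝ to ℝ, and let μ := F.prod (G ⊗ₘ κ) be the resulting probability measure on ℝ × (ℝ × ℝ), a generic point being written (t,(w,c)). Define h : ℝ → [0,∞] by h(t) := (G ⊗ₘ κ)({(w,c) : w ≤ t and t ≤ c}). Then: (i) for every Borel set A ⊆ ℝ, μ({(t,(w,c)) : t ∈ A, w ≤ t, t ≤ c}) = ∫_A h(t) dF(t); (ii) for every u ∈ ℝ, μ({(t,(w,c)) : w ≤ u, u ≤ t, u ≤ c}) = F([u,∞)) · h(u); and (iii) if B ⊆ ℝ is Borel and for F-almost every t ∈ B one has 0 < h(t) < ∞ and F([t,∞)) > 0, then ∫_B (F([t,∞)) · h(t))⁻¹ dN(t) = ∫_B F([t,∞))⁻¹ dF(t), where N := F.withDensity h. (Identification of the target conditional cumulative hazard from left-truncated right-censored data: the observable hazard measure, built from the uncensored-event subdistribution N and the at-risk probability R(u) = F([u,∞))·h(u), coincides with the target hazard measure of F.) -/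

import Mathlib

open Set MeasureTheory ProbabilityTheory
open scoped ENNReal

/-- Identification of the target conditional cumulative hazard from left-truncated
right-censored data: with `μ = F.prod (G ⊗ₘ κ)`, `h t = (G ⊗ₘ κ) {(w,c) : w ≤ t ∧ t ≤ c}`,
(i) the uncensored-event subdistribution has `F`-density `h`; (ii) the at-risk probability at
`u` is `F [u,∞) * h u`; and (iii) the observable hazard measure equals the target hazard
measure of `F`. -/
theorem hazard_identification_left_truncation_right_censoring
    (F G : Measure ℝ) [IsProbabilityMeasure F] [IsProbabilityMeasure G]
    (κ : Kernel ℝ ℝ) [IsMarkovKernel κ]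
    (μ : Measure (ℝ × ℝ × ℝ)) (hμ : μ = F.prod (G ⊗ₘ κ))
    (h : ℝ → ℝ≥0∞)
    (hh : ∀ t, h t = (G ⊗ₘ κ) {p : ℝ × ℝ | p.1 ≤ t ∧ t ≤ p.2}) :
    (∀ A : Set ℝ, MeasurableSet A →
        μ {q : ℝ × ℝ × ℝ | q.1 ∈ A ∧ q.2.1 ≤ q.1 ∧ q.1 ≤ q.2.2}
          = ∫⁻ t in A, h t ∂F)
    ∧ (∀ u : ℝ,
        μ {q : ℝ × ℝ × ℝ | q.2.1 ≤ u ∧ u ≤ q.1 ∧ u ≤ q.2.2}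
          = F (Ici u) * h u)
    ∧ (∀ B : Set ℝ, MeasurableSet B →
        (∀ᵐ t ∂F, t ∈ B → 0 < h t ∧ h t < ⊤ ∧ 0 < F (Ici t)) →
        ∫⁻ t in B, (F (Ici t) * h t)⁻¹ ∂(F.withDensity h)
          = ∫⁻ t in B, (F (Ici t))⁻¹ ∂F) := by
  have hSmeas : MeasurableSet {q : ℝ × ℝ × ℝ | q.2.1 ≤ q.1 ∧ q.1 ≤ q.2.2} :=
    (measurableSet_le (measurable_fst.comp measurable_snd) measurable_fst).inter
      (measurableSet_le measurable_fst (measurable_snd.comp measurable_snd))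
  have hhm : Measurable h := by
    have : Measurable fun t : ℝ =>
        (G ⊗ₘ κ) (Prod.mk t ⁻¹' {q : ℝ × ℝ × ℝ | q.2.1 ≤ q.1 ∧ q.1 ≤ q.2.2}) :=
      measurable_measure_prodMk_left hSmeas
    have heq : ∀ t : ℝ, Prod.mk t ⁻¹' {q : ℝ × ℝ × ℝ | q.2.1 ≤ q.1 ∧ q.1 ≤ q.2.2}
        = {p : ℝ × ℝ | p.1 ≤ t ∧ t ≤ p.2} := fun t => rfl
    simpa [heq, ← hh] using this
  have hFIci : Measurable fun t : ℝ => F (Ici t) := by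
    have : Antitone fun t : ℝ => F (Ici t) := fun a b hab => by
      exact measure_mono (Ici_subset_Ici.mpr hab)
    exact this.measurable
  refine ⟨?_, ?_, ?_⟩
  · intro A hA
    have hS : MeasurableSet {q : ℝ × ℝ × ℝ | q.1 ∈ A ∧ q.2.1 ≤ q.1 ∧ q.1 ≤ q.2.2} :=
      (measurable_fst hA).inter hSmeas
    rw [hμ, Measure.prod_apply hS]
    have : ∀ t : ℝ, (G ⊗ₘ κ)
        (Prod.mk t ⁻¹' {q : ℝ × ℝ × ℝ | q.1 ∈ A ∧ q.2.1 ≤ q.1 ∧ q.1 ≤ q.2.2})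
        = A.indicator h t := by
      intro t
      by_cases ht : t ∈ A
      · have : Prod.mk t ⁻¹' {q : ℝ × ℝ × ℝ | q.1 ∈ A ∧ q.2.1 ≤ q.1 ∧ q.1 ≤ q.2.2}
            = {p : ℝ × ℝ | p.1 ≤ t ∧ t ≤ p.2} := by
          ext p; simp [ht]
        rw [this, ← hh t, indicator_of_mem ht]
      · have : Prod.mk t ⁻¹' {q : ℝ × ℝ × ℝ | q.1 ∈ A ∧ q.2.1 ≤ q.1 ∧ q.1 ≤ q.2.2}
            = (∅ : Set (ℝ × ℝ)) := by
          ext p; simp [ht]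
        rw [this, indicator_of_notMem ht]; simp
    simp_rw [this]
    exact lintegral_indicator hA h
  · intro u
    have hset : {q : ℝ × ℝ × ℝ | q.2.1 ≤ u ∧ u ≤ q.1 ∧ u ≤ q.2.2}
        = (Ici u) ×ˢ {p : ℝ × ℝ | p.1 ≤ u ∧ u ≤ p.2} := by
      ext q; simp [mem_prod]; tauto
    rw [hμ, hset, Measure.prod_prod, hh u]
  · intro B hB hae
    rw [restrict_withDensity hB,
      lintegral_withDensity_eq_lintegral_mul _ hhm (show Measurable fun t => (F (Ici t) * h t)⁻¹ from (hFIci.mul hhm).inv)]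
    refine lintegral_congr_ae ((ae_restrict_iff' hB).mpr ?_)
    filter_upwards [hae] with t ht htB
    obtain ⟨h0, htop, hF0⟩ := ht htB
    simp only [Pi.mul_apply]
    rw [ENNReal.mul_inv (Or.inr htop.ne) (Or.inr h0.ne'), mul_comm (h t),
      mul_assoc, ENNReal.inv_mul_cancel h0.ne' htop.ne, mul_one]
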